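/- Let U ⊆ V, i ∈ V, and j ∈ an(i) (so b_{ji} > 0). (a) There is a max-weighted path from j to i that passes through some node in U if and only if b_{ji} = max_{k ∈ De(j)∩U∩An(i)} b_{jk} b_{ki} / b_{kk}. (b) No max-weighted path from j to i passes through some node in U if and only if b_{ji} > max_{k ∈ De(j)∩U∩An(i)} b_{jk} b_{ki} / b_{kk}, where the maximum over the empty set is 0 (so (b) also covers U = ∅). -/

import Mathlib

open scoped NNReal ENNReal Classical

namespace MaxLinearDAG

variable {d : ℕ}

/-- `p` is a directed path (with at least one edge) from `j` to `i` in the edge relation `E`. -/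
def PathFrom (E : Fin d → Fin d → Prop) (j i : Fin d) (p : List (Fin d)) : Prop :=
  2 ≤ p.length ∧ p.head? = some j ∧ p.getLast? = some i ∧ List.Chain' E p

/-- The directed graph given by `E` is acyclic: no directed path from a node to itself. -/
def Acyclic (E : Fin d → Fin d → Prop) : Prop :=
  ∀ i, ¬ ∃ p, PathFrom E i i p

/-- `j` is an ancestor of `i`: there is a path from `j` to `i`. -/
def anc (E : Fin d → Fin d → Prop) (j i : Fin d) : Prop :=
  ∃ p, PathFrom E j i p

/-- The weight of a path `p` starting at `j`: `c j j` times the product of the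
edge weights along `p`. -/
noncomputable def pathWeight (c : Fin d → Fin d → ℝ≥0) (j : Fin d) (p : List (Fin d)) : ℝ≥0 :=
  c j j * ((p.zip p.tail).map fun q => c q.1 q.2).prod

/-- `b` is the max-linear coefficient matrix of the recursive ML model on `(E, c)`:
for `j ∈ an(i)`, `b j i` is the (attained) maximum of the path weights over all paths
from `j` to `i`; `b i i = c i i`; and `b j i = 0` for `j ∉ An(i)`. -/
def IsMLMatrix (E : Fin d → Fin d → Prop) (c b : Fin d → Fin d → ℝ≥0) : Prop :=
  (∀ i, b i i = c i i) ∧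
  (∀ j i, j ≠ i → ¬ anc E j i → b j i = 0) ∧
  (∀ j i p, PathFrom E j i p → pathWeight c j p ≤ b j i) ∧
  (∀ j i, anc E j i → ∃ p, PathFrom E j i p ∧ pathWeight c j p = b j i)

/-- `x` is the vector of recursive max-linear values on `(E, c)` for noise `z`:
`x i = max (max_{k ∈ pa(i)} c k i * x k) (c i i * z i)`, empty max being `0`. -/
def IsRecML (E : Fin d → Fin d → Prop) (c : Fin d → Fin d → ℝ≥0) (z x : Fin d → ℝ≥0) : Prop :=
  ∀ i, x i = (Finset.univ.sup fun k => if E k i then c k i * x k else 0) ⊔ c i i * z i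

/-- Max-times matrix product `F ⊙ G`. -/
noncomputable def mprod (F G : Fin d → Fin d → ℝ≥0) : Fin d → Fin d → ℝ≥0 :=
  fun i j => Finset.univ.sup fun k => F i k * G k j

/-- Max-times matrix power, `mpow A 0` being the identity matrix. -/
noncomputable def mpow (A : Fin d → Fin d → ℝ≥0) : ℕ → Fin d → Fin d → ℝ≥0
  | 0 => fun i j => if i = j then 1 else 0
  | n + 1 => mprod (mpow A n) A

/-- `p` is a max-weighted path from `j` to `i`. -/
def MaxWeighted (E : Fin d → Fin d → Prop) (c b : Fin d → Fin d → ℝ≥0)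
    (j i : Fin d) (p : List (Fin d)) : Prop :=
  PathFrom E j i p ∧ pathWeight c j p = b j i

/-- The lowest max-weighted ancestors of `i` in `U`: nodes `j ∈ An(i) ∩ U` such that no
max-weighted path from `j` to `i` passes through a node of `U \ {j}`. -/
def AnLow (E : Fin d → Fin d → Prop) (c b : Fin d → Fin d → ℝ≥0)
    (U : Set (Fin d)) (i : Fin d) : Set (Fin d) :=
  {j | (anc E j i ∨ j = i) ∧ j ∈ U ∧
    ∀ p, MaxWeighted E c b j i p → ¬ ∃ u ∈ U \ {j}, u ∈ p}

/-- The highest max-weighted descendants of `i` in `U`: nodes `l ∈ De(i) ∩ U` such that no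
max-weighted path from `i` to `l` passes through a node of `U \ {l}`. -/
def DeHigh (E : Fin d → Fin d → Prop) (c b : Fin d → Fin d → ℝ≥0)
    (U : Set (Fin d)) (i : Fin d) : Set (Fin d) :=
  {l | (anc E i l ∨ l = i) ∧ l ∈ U ∧
    ∀ p, MaxWeighted E c b i l p → ¬ ∃ u ∈ U \ {l}, u ∈ p}

section Helpers

variable {E : Fin d → Fin d → Prop} {c b : Fin d → Fin d → ℝ≥0}

lemma zip_tail_append {α : Type*} (p : List α) (r : List α) (k : α)
    (hp : p.getLast? = some k) :
    (p ++ r).zip (p ++ r).tail = p.zip p.tail ++ ((k :: r).zip r) := by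
  induction p with
  | nil => simp at hp
  | cons a q ih =>
    cases q with
    | nil =>
      simp only [List.getLast?_singleton, Option.some.injEq] at hp
      subst hp; simp
    | cons x t =>
      have h' := ih (by simpa using hp)
      simp only [List.cons_append, List.zip_cons_cons, List.tail_cons] at h' ⊢
      rw [h']

lemma chain'_zip_mem {p : List (Fin d)} (h : List.Chain' E p) :
    ∀ q ∈ p.zip p.tail, E q.1 q.2 := by
  induction p with
  | nil => simp
  | cons a q ih =>
    cases q with
    | nil => simp
    | cons x t =>
      rw [show List.Chain' E _ = List.IsChain E _ from rfl, List.isChain_cons_cons] at h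
      intro q hq
      simp only [List.tail_cons, List.zip_cons_cons, List.mem_cons] at hq
      rcases hq with rfl | hq
      · exact h.1
      · exact ih h.2 q hq

lemma pathWeight_pos (hcd : ∀ i, 0 < c i i) (hce : ∀ k i, E k i → 0 < c k i)
    {j i : Fin d} {p : List (Fin d)} (hp : PathFrom E j i p) : 0 < pathWeight c j p := by
  refine mul_pos (hcd j) (List.prod_pos ?_)
  intro a ha
  obtain ⟨q, hq, rfl⟩ := List.mem_map.mp ha
  exact hce _ _ (chain'_zip_mem hp.2.2.2 q hq)

lemma pathWeight_append_eq {j k : Fin d} {p : List (Fin d)} (hp : p.getLast? = some k)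
    (t : List (Fin d)) :
    pathWeight c j (p ++ t) * c k k = pathWeight c j p * pathWeight c k (k :: t) := by
  unfold pathWeight
  rw [zip_tail_append p t k hp, List.map_append, List.prod_append]
  have ht : (k :: t).tail = t := rfl
  rw [ht]
  ring

lemma pathFrom_append {j k i : Fin d} {p q : List (Fin d)}
    (hp : PathFrom E j k p) (hq : PathFrom E k i q) :
    PathFrom E j i (p ++ q.tail) ∧
      pathWeight c j (p ++ q.tail) * c k k = pathWeight c j p * pathWeight c k q := by
  obtain ⟨hpl, hph, hpt, hpc⟩ := hp
  obtain ⟨hql, hqh, hqt, hqc⟩ := hq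
  obtain ⟨a, y, t, rfl⟩ : ∃ a y t, q = a :: y :: t := by
    match q, hql with
    | a :: y :: t, _ => exact ⟨a, y, t, rfl⟩
  have hak : a = k := by simpa using hqh
  subst hak
  have hpn : p ≠ [] := by rintro rfl; simp at hpl
  refine ⟨⟨?_, ?_, ?_, ?_⟩, ?_⟩
  · rw [List.length_append]; omega
  · rw [List.head?_append_of_ne_nil _ hpn]; exact hph
  · rw [List.tail_cons, List.getLast?_append_of_ne_nil _ (by simp)]
    rw [List.getLast?_cons_cons] at hqt; exact hqt
  · rw [show List.Chain' E _ = List.IsChain E _ from rfl, List.isChain_append]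
    refine ⟨hpc, (List.isChain_cons_cons.mp hqc).2, ?_⟩
    intro x hx y' hy'
    rw [hpt, Option.mem_def, Option.some.injEq] at hx
    simp only [List.tail_cons, List.head?_cons, Option.mem_def, Option.some.injEq] at hy'
    subst hx; subst hy'
    exact (List.isChain_cons_cons.mp hqc).1
  · rw [List.tail_cons]
    exact pathWeight_append_eq hpt (y :: t)

lemma pathFrom_split {j i u : Fin d} {p : List (Fin d)}
    (hp : PathFrom E j i p) (hu : u ∈ p) (huj : u ≠ j) (hui : u ≠ i) :
    ∃ p1 p2, PathFrom E j u p1 ∧ PathFrom E u i p2 ∧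
      pathWeight c j p * c u u = pathWeight c j p1 * pathWeight c u p2 := by
  obtain ⟨s, t, rfl⟩ := List.append_of_mem hu
  obtain ⟨hpl, hph, hpt, hpc⟩ := hp
  have hs : s ≠ [] := by
    rintro rfl
    simp only [List.nil_append, List.head?_cons, Option.some.injEq] at hph
    exact huj hph
  have ht : t ≠ [] := by
    rintro rfl
    rw [List.getLast?_append_of_ne_nil _ (by simp), List.getLast?_singleton,
      Option.some.injEq] at hpt
    exact hui hpt
  have hre : s ++ u :: t = (s ++ [u]) ++ t := by simp
  have hc2 : List.Chain' E ((s ++ [u]) ++ t) := hre ▸ hpc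
  rw [show List.Chain' E _ = List.IsChain E _ from rfl, List.isChain_append] at hc2
  refine ⟨s ++ [u], u :: t, ⟨?_, ?_, ?_, hc2.1⟩, ⟨?_, ?_, ?_, ?_⟩, ?_⟩
  · rw [List.length_append]
    have := List.length_pos_iff.mpr hs
    simp; omega
  · rw [List.head?_append_of_ne_nil _ hs]
    rwa [List.head?_append_of_ne_nil _ hs] at hph
  · simp
  · have := List.length_pos_iff.mpr ht
    simp; omega
  · simp
  · rw [List.getLast?_append_of_ne_nil _ (by simp)] at hpt
    exact hpt
  · rw [show List.Chain' E _ = List.IsChain E _ from rfl, List.isChain_append] at hpc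
    exact hpc.2.1
  · have := pathWeight_append_eq (c := c) (j := j) (p := s ++ [u]) (k := u) (by simp) t
    rw [← hre] at this
    exact this

lemma PathFrom.head_mem {j i : Fin d} {p : List (Fin d)} (hp : PathFrom E j i p) : j ∈ p :=
  List.mem_of_mem_head? (by simp [hp.2.1])

lemma PathFrom.last_mem {j i : Fin d} {p : List (Fin d)} (hp : PathFrom E j i p) : i ∈ p :=
  List.mem_of_mem_getLast? (by simp [hp.2.2.1])

end Helpers

/-- Let `U ⊆ V`, `i ∈ V`, `j ∈ an(i)`.
(a) There is a max-weighted path from `j` to `i` passing through some node in `U` iff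
`b j i = max_{k ∈ De(j) ∩ U ∩ An(i)} b j k * b k i / b k k`.
(b) No max-weighted path from `j` to `i` passes through some node in `U` iff
`b j i > max_{k ∈ De(j) ∩ U ∩ An(i)} b j k * b k i / b k k` (empty max being `0`,
which also covers `U = ∅`). -/
theorem stmt3 {d : ℕ} (hd : 1 ≤ d) (E : Fin d → Fin d → Prop) (hE : Acyclic E)
    (c : Fin d → Fin d → ℝ≥0) (hcd : ∀ i, 0 < c i i) (hce : ∀ k i, E k i → 0 < c k i)
    (b : Fin d → Fin d → ℝ≥0) (hb : IsMLMatrix E c b)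
    (U : Set (Fin d)) (i j : Fin d) (hj : anc E j i) :
    ((∃ p, MaxWeighted E c b j i p ∧ ∃ u ∈ U, u ∈ p) ↔
      b j i = Finset.univ.sup fun k =>
        if (anc E j k ∨ k = j) ∧ k ∈ U ∧ (anc E k i ∨ k = i)
        then b j k * b k i / b k k else 0) ∧
    ((∀ p, MaxWeighted E c b j i p → ¬ ∃ u ∈ U, u ∈ p) ↔
      (Finset.univ.sup fun k =>
        if (anc E j k ∨ k = j) ∧ k ∈ U ∧ (anc E k i ∨ k = i)
        then b j k * b k i / b k k else 0) < b j i) := by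
  obtain ⟨hbd, hb0, hble, hbex⟩ := hb
  set S := Finset.univ.sup fun k =>
    if (anc E j k ∨ k = j) ∧ k ∈ U ∧ (anc E k i ∨ k = i)
    then b j k * b k i / b k k else 0 with hSdef
  obtain ⟨p0, hp0, hw0⟩ := hbex j i hj
  have hbji : 0 < b j i := hw0 ▸ pathWeight_pos hcd hce hp0
  have hji : j ≠ i := by rintro rfl; exact hE j ⟨p0, hp0⟩
  -- Lemma A : S ≤ b j i
  have hA : S ≤ b j i := by
    apply Finset.sup_le
    intro k _
    split_ifs with hk
    · obtain ⟨hk1, hkU, hk2⟩ := hk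
      rcases hk1 with hjk | rfl
      · rcases hk2 with hki | rfl
        · obtain ⟨p, hp, hwp⟩ := hbex j k hjk
          obtain ⟨q, hq, hwq⟩ := hbex k i hki
          obtain ⟨hr, hwr⟩ := pathFrom_append (c := c) hp hq
          rw [hbd, div_le_iff₀ (hcd k)]
          calc b j k * b k i = pathWeight c j (p ++ q.tail) * c k k := by
                rw [hwr, hwp, hwq]
            _ ≤ b j i * c k k := mul_le_mul_left (hble _ _ _ hr) _
        · rw [hbd, mul_div_assoc, div_self (hcd k).ne', mul_one]
      · rcases hk2 with hki | rfl
        · rw [hbd, mul_div_cancel_left₀ _ (hcd k).ne']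
        · exact absurd rfl hji
    · exact zero_le
  -- Lemma B→ : existence implies b j i ≤ S
  have hB1 : (∃ p, MaxWeighted E c b j i p ∧ ∃ u ∈ U, u ∈ p) → b j i ≤ S := by
    rintro ⟨p, ⟨hp, hwp⟩, u, huU, hup⟩
    have key : ∃ k, k ∈ U ∧ (anc E j k ∨ k = j) ∧ (anc E k i ∨ k = i) ∧
        b j i ≤ b j k * b k i / b k k := by
      by_cases huj : u = j
      · subst huj
        exact ⟨u, huU, Or.inr rfl, Or.inl hj,
          le_of_eq (by rw [hbd, mul_div_cancel_left₀ _ (hcd u).ne'])⟩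
      by_cases hui : u = i
      · subst hui
        exact ⟨u, huU, Or.inl hj, Or.inr rfl,
          le_of_eq (by rw [hbd, mul_div_assoc, div_self (hcd u).ne', mul_one])⟩
      obtain ⟨p1, p2, hp1, hp2, hmul⟩ := pathFrom_split (c := c) hp hup huj hui
      refine ⟨u, huU, Or.inl ⟨p1, hp1⟩, Or.inl ⟨p2, hp2⟩, ?_⟩
      rw [hbd, le_div_iff₀ (hcd u)]
      calc b j i * c u u = pathWeight c j p1 * pathWeight c u p2 := by rw [← hwp, hmul]
        _ ≤ b j u * b u i := mul_le_mul' (hble _ _ _ hp1) (hble _ _ _ hp2)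
    obtain ⟨k, hkU, hk1, hk2, hkle⟩ := key
    calc b j i ≤ (if (anc E j k ∨ k = j) ∧ k ∈ U ∧ (anc E k i ∨ k = i)
          then b j k * b k i / b k k else 0) := by
            rw [if_pos ⟨hk1, hkU, hk2⟩]; exact hkle
      _ ≤ S := by
            rw [hSdef]
            exact Finset.le_sup (f := fun k =>
              if (anc E j k ∨ k = j) ∧ k ∈ U ∧ (anc E k i ∨ k = i)
              then b j k * b k i / b k k else 0) (Finset.mem_univ k)
  -- Lemma B← : b j i ≤ S implies existence
  have hB2 : b j i ≤ S → ∃ p, MaxWeighted E c b j i p ∧ ∃ u ∈ U, u ∈ p := by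
    intro hle
    rw [hSdef, Finset.le_sup_iff hbji] at hle
    obtain ⟨k, -, hk⟩ := hle
    by_cases hcond : (anc E j k ∨ k = j) ∧ k ∈ U ∧ (anc E k i ∨ k = i)
    · rw [if_pos hcond] at hk
      obtain ⟨hk1, hkU, hk2⟩ := hcond
      rcases hk1 with hjk | rfl
      · rcases hk2 with hki | rfl
        · obtain ⟨p, hp, hwp⟩ := hbex j k hjk
          obtain ⟨q, hq, hwq⟩ := hbex k i hki
          obtain ⟨hr, hwr⟩ := pathFrom_append (c := c) hp hq
          have hwr' : pathWeight c j (p ++ q.tail) = b j i := by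
            refine le_antisymm (hble _ _ _ hr) ?_
            have h1 : b j i * c k k ≤ pathWeight c j (p ++ q.tail) * c k k := by
              rw [hwr, hwp, hwq]
              rw [hbd, le_div_iff₀ (hcd k)] at hk
              exact hk
            exact le_of_mul_le_mul_right h1 (hcd k)
          refine ⟨p ++ q.tail, ⟨hr, hwr'⟩, k, hkU, ?_⟩
          exact List.mem_append_left _ (PathFrom.last_mem hp)
        · exact ⟨p0, ⟨hp0, hw0⟩, k, hkU, PathFrom.last_mem hp0⟩
      · exact ⟨p0, ⟨hp0, hw0⟩, k, hkU, PathFrom.head_mem hp0⟩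
    · rw [if_neg hcond] at hk
      exact absurd hk (by simpa using hbji.ne')
  constructor
  · exact ⟨fun h => le_antisymm (hB1 h) hA, fun h => hB2 h.le⟩
  · constructor
    · intro h
      refine lt_of_le_of_ne hA fun hSe => ?_
      obtain ⟨p, hmw, u, huU, hup⟩ := hB2 hSe.ge
      exact h p hmw ⟨u, huU, hup⟩
    · rintro hlt p hmw ⟨u, huU, hup⟩
      exact absurd (hB1 ⟨p, hmw, u, huU, hup⟩) (not_le.mpr hlt)
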